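/- For every integer n > 2, the unique fixed point p_n ∈ (0,1) of P_n satisfies p_n < 1/2. -/

import Mathlib

open Real Filter Topology

/-- Generalized binomial coefficient `binom(n, α) = n! / (Γ(α+1)·Γ(n-α+1))`. -/
noncomputable def gbinom (n : ℕ) (a : ℝ) : ℝ :=
  (n.factorial : ℝ) / (Real.Gamma (a + 1) * Real.Gamma ((n : ℝ) - a + 1))

/-- The function `P_n(p) = binom(n, np) · p^(np) · (1-p)^(n(1-p))`. -/
noncomputable def Pn (n : ℕ) (p : ℝ) : ℝ :=
  gbinom n ((n : ℝ) * p) * p ^ ((n : ℝ) * p) * (1 - p) ^ ((n : ℝ) * (1 - p))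

lemma gammaContAt {s : ℝ} (hs : 0 < s) : ContinuousAt Real.Gamma s :=
  (Real.differentiableAt_Gamma fun m =>
    (lt_of_le_of_lt (neg_nonpos.mpr m.cast_nonneg) hs).ne').continuousAt

lemma key (n : ℕ) (hn : 2 < n) : Pn n (1/2) < 1/2 := by
  have hn3 : (3:ℝ) ≤ (n:ℝ) := by exact_mod_cast hn
  set x : ℝ := (n:ℝ)/2 with hx
  have hx0 : 0 < x := by positivity
  set A : ℝ := Real.Gamma (x + 1) with hA
  set B : ℝ := Real.Gamma (x + 1/2) with hB
  have hA0 : 0 < A := Real.Gamma_pos_of_pos (by linarith)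
  have hB0 : 0 < B := Real.Gamma_pos_of_pos (by linarith)
  have hsp : (0:ℝ) < √π := Real.sqrt_pos.mpr Real.pi_pos
  have hsx : (0:ℝ) < Real.sqrt x := Real.sqrt_pos.mpr hx0
  -- duplication at s = x + 1/2
  have hdup := Real.Gamma_mul_Gamma_add_half (x + 1/2)
  have h2s : 2 * (x + 1/2) = (n:ℝ) + 1 := by rw [hx]; ring
  have hfac : Real.Gamma ((n:ℝ) + 1) = (n.factorial : ℝ) := by
    exact_mod_cast Real.Gamma_nat_eq_factorial n
  have hBA : B * A = (n.factorial : ℝ) * (2:ℝ) ^ (-(n:ℝ)) * √π := by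
    have h1 : x + 1/2 + 1/2 = x + 1 := by ring
    rw [h1, h2s, hfac, ← hB, ← hA] at hdup
    rw [hdup]
    congr 2
    norm_num
  -- Pn value
  have hPval : Pn n (1/2) = B / (A * √π) := by
    have h2 : (0:ℝ) < 1/2 := by norm_num
    have e1 : (n:ℝ) * (1/2) = x := by rw [hx]; ring
    have e2 : (n:ℝ) * (1 - 1/2) = x := by rw [hx]; ring
    have e3 : (1:ℝ) - 1/2 = 1/2 := by norm_num
    have hrw : Pn n (1/2) = gbinom n x * ((1:ℝ)/2) ^ ((n:ℝ)) := by
      rw [Pn, e1, e2, e3, mul_assoc, ← Real.rpow_add h2]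
      congr 2
      rw [hx]; ring
    rw [hrw]
    have hgb : gbinom n x = (n.factorial : ℝ) / (A * A) := by
      rw [gbinom, ← hA]
      congr 3
      rw [hx]; ring
    rw [hgb]
    have hhalf : ((1:ℝ)/2) ^ ((n:ℝ)) = ((2:ℝ) ^ ((n:ℝ)))⁻¹ := by
      rw [one_div, Real.inv_rpow (by norm_num)]
    have h2n : (n.factorial : ℝ) = B * A * (2:ℝ) ^ ((n:ℝ)) / √π := by
      rw [hBA, Real.rpow_neg (by norm_num)]
      field_simp
    rw [h2n, hhalf]
    have h2p : (0:ℝ) < (2:ℝ) ^ ((n:ℝ)) := Real.rpow_pos_of_pos (by norm_num) _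
    field_simp
  rw [hPval]
  -- log-convexity: B ≤ A / √x
  have hlc : B ≤ A / Real.sqrt x := by
    have h := Real.Gamma_mul_add_mul_le_rpow_Gamma_mul_rpow_Gamma
      (s := x) (t := x + 1) (a := 1/2) (b := 1/2) hx0 (by linarith) (by norm_num)
      (by norm_num) (by norm_num)
    have harg : (1/2:ℝ) * x + (1/2:ℝ) * (x+1) = x + 1/2 := by ring
    rw [harg] at h
    have hGx : Real.Gamma x = A / x := by
      rw [hA, Real.Gamma_add_one (ne_of_gt hx0)]
      field_simp
    rw [hGx, ← hA] at h
    have hAx : (A / x) ^ ((1:ℝ)/2) * A ^ ((1:ℝ)/2) = A / Real.sqrt x := by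
      rw [Real.div_rpow hA0.le hx0.le, div_mul_eq_mul_div, ← Real.rpow_add hA0,
        Real.sqrt_eq_rpow]
      norm_num
    rw [← hB] at h
    exact h.trans_eq hAx
  have hsq : 2 < Real.sqrt x * √π := by
    have hxpi : 4 < x * π := by
      rw [hx]; nlinarith [Real.pi_gt_three]
    have hs2 : (Real.sqrt x * √π)^2 = x * π := by
      rw [mul_pow, Real.sq_sqrt hx0.le, Real.sq_sqrt Real.pi_pos.le]
    nlinarith [mul_pos hsx hsp, hs2, sq_nonneg (Real.sqrt x * √π - 2)]
  calc B / (A * √π) ≤ (A / Real.sqrt x) / (A * √π) :=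
        (div_le_div_iff_of_pos_right (by positivity)).mpr hlc
    _ = 1 / (Real.sqrt x * √π) := by field_simp
    _ < 1/2 := by
        rw [div_lt_div_iff₀ (by positivity) (by norm_num)]
        linarith

lemma pnContAt (n : ℕ) {q : ℝ} (hq : q ∈ Set.Ioo (0:ℝ) 1) : ContinuousAt (Pn n) q := by
  obtain ⟨h0, h1⟩ := hq
  have hn0 : (0:ℝ) ≤ (n:ℝ) := n.cast_nonneg
  have hg1 : ContinuousAt (fun q : ℝ => Real.Gamma ((n:ℝ) * q + 1)) q :=
    (gammaContAt (by positivity)).comp (by fun_prop)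
  have hg2 : ContinuousAt (fun q : ℝ => Real.Gamma ((n:ℝ) - (n:ℝ) * q + 1)) q :=
    (gammaContAt (by nlinarith)).comp (by fun_prop)
  have hden : Real.Gamma ((n:ℝ) * q + 1) * Real.Gamma ((n:ℝ) - (n:ℝ) * q + 1) ≠ 0 :=
    (mul_pos (Real.Gamma_pos_of_pos (by positivity))
      (Real.Gamma_pos_of_pos (by nlinarith))).ne'
  unfold Pn gbinom
  refine ContinuousAt.mul (ContinuousAt.mul ?_ ?_) ?_
  · exact continuousAt_const.div (hg1.mul hg2) hden
  · exact continuousAt_id.rpow (by fun_prop) (Or.inl h0.ne')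
  · exact ((continuous_const.sub continuous_id).continuousAt).rpow (by fun_prop)
      (Or.inl (by intro h; simp at h; linarith))

lemma pnTendsto (n : ℕ) : Tendsto (Pn n) (𝓝[>] (0:ℝ)) (𝓝 1) := by
  have hn0 : (0:ℝ) ≤ (n:ℝ) := n.cast_nonneg
  have T1 : Tendsto (fun q : ℝ => gbinom n ((n:ℝ) * q)) (𝓝[>] (0:ℝ)) (𝓝 1) := by
    have hc : ContinuousAt (fun q : ℝ => gbinom n ((n:ℝ) * q)) 0 := by
      have hg1 : ContinuousAt (fun q : ℝ => Real.Gamma ((n:ℝ) * q + 1)) 0 :=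
        (gammaContAt (by norm_num)).comp (by fun_prop)
      have hg2 : ContinuousAt (fun q : ℝ => Real.Gamma ((n:ℝ) - (n:ℝ) * q + 1)) 0 :=
        (gammaContAt (by simp; positivity)).comp (by fun_prop)
      have hden : Real.Gamma ((n:ℝ) * 0 + 1) * Real.Gamma ((n:ℝ) - (n:ℝ) * 0 + 1) ≠ 0 := by
        refine (mul_pos (Real.Gamma_pos_of_pos (by norm_num))
          (Real.Gamma_pos_of_pos (by simp; positivity))).ne'
      unfold gbinom
      exact continuousAt_const.div (hg1.mul hg2) hden
    have hval : gbinom n ((n:ℝ) * 0) = 1 := by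
      unfold gbinom
      rw [mul_zero, zero_add, Real.Gamma_one, sub_zero]
      rw [show ((n:ℝ) + 1) = ((n:ℕ) : ℝ) + 1 by norm_num, Real.Gamma_nat_eq_factorial]
      simp [Nat.factorial_ne_zero]
    have := hc.tendsto
    rw [hval] at this
    exact this.mono_left nhdsWithin_le_nhds
  have T2 : Tendsto (fun q : ℝ => q ^ ((n:ℝ) * q)) (𝓝[>] (0:ℝ)) (𝓝 1) := by
    have hlog : Tendsto (fun q : ℝ => Real.log q * q) (𝓝[>] (0:ℝ)) (𝓝 0) := by
      have := tendsto_log_mul_rpow_nhdsGT_zero one_pos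
      simpa [Real.rpow_one] using this
    have hlog2 : Tendsto (fun q : ℝ => Real.log q * ((n:ℝ) * q)) (𝓝[>] (0:ℝ)) (𝓝 0) := by
      have := hlog.const_mul (n:ℝ)
      simp only [mul_zero] at this
      convert this using 2 with q
      ring
    have := (Real.continuous_exp.tendsto 0).comp hlog2
    rw [Real.exp_zero] at this
    refine this.congr' ?_
    filter_upwards [self_mem_nhdsWithin] with q hq
    rw [Function.comp_apply, Real.rpow_def_of_pos hq]
  have T3 : Tendsto (fun q : ℝ => (1 - q) ^ ((n:ℝ) * (1 - q))) (𝓝[>] (0:ℝ)) (𝓝 1) := by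
    have hc : ContinuousAt (fun q : ℝ => (1 - q) ^ ((n:ℝ) * (1 - q))) 0 :=
      ((continuous_const.sub continuous_id).continuousAt).rpow (by fun_prop)
        (Or.inl (by norm_num))
    have := hc.tendsto
    norm_num at this
    exact this.mono_left nhdsWithin_le_nhds
  have := (T1.mul T2).mul T3
  norm_num at this
  exact this

/-- For every integer `n > 2`, the unique fixed point `p ∈ (0,1)` of `P_n` satisfies
`p < 1/2`. -/
theorem fixed_point_lt_half (n : ℕ) (hn : 2 < n)
    (p : ℝ) (hp : p ∈ Set.Ioo (0:ℝ) 1) (hfix : Pn n p = p)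
    (huniq : ∀ q ∈ Set.Ioo (0:ℝ) 1, Pn n q = q → q = p) :
    p < 1/2 := by
  have hev : ∀ᶠ q in 𝓝[>] (0:ℝ), 1/2 < Pn n q :=
    (pnTendsto n).eventually (eventually_gt_nhds (by norm_num))
  have hev2 : Set.Ioo (0:ℝ) (1/2) ∈ 𝓝[>] (0:ℝ) :=
    Ioo_mem_nhdsGT_of_mem (by constructor <;> norm_num)
  obtain ⟨q1, hq1P, hq1mem⟩ := (hev.and hev2).exists
  obtain ⟨hq10, hq1half⟩ := hq1mem
  set f : ℝ → ℝ := fun q => Pn n q - q with hf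
  have hcont : ContinuousOn f (Set.Icc q1 (1/2)) := by
    intro q hq
    have hqIoo : q ∈ Set.Ioo (0:ℝ) 1 := ⟨lt_of_lt_of_le hq10 hq.1, by
      have := hq.2; linarith⟩
    exact ((pnContAt n hqIoo).sub continuousAt_id).continuousWithinAt
  have hfb : f (1/2) < 0 := by
    simp only [hf]
    have := key n hn
    linarith
  have hfa : 0 < f q1 := by
    simp only [hf]
    linarith
  have h0mem : (0:ℝ) ∈ Set.Ioo (f (1/2)) (f q1) := ⟨hfb, hfa⟩
  obtain ⟨q0, hq0mem, hq0⟩ := intermediate_value_Ioo' (le_of_lt hq1half) hcont h0mem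
  have hq0Ioo : q0 ∈ Set.Ioo (0:ℝ) 1 :=
    ⟨lt_trans hq10 hq0mem.1, by have := hq0mem.2; linarith⟩
  have hq0fix : Pn n q0 = q0 := by
    have : Pn n q0 - q0 = 0 := hq0
    linarith
  have := huniq q0 hq0Ioo hq0fix
  rw [← this]
  exact hq0mem.2
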